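/- Let $M_n$ denote the maximal cardinality of a weak anti-clique contained in an open ball of radius 1 in $\mathbb{R}^n$. Then $1 < M_n < M_{n+1}$ for each $n \ge 1$. -/

import Mathlib

set_option maxHeartbeats 1000000

noncomputable def myL {n : ℕ} (x : EuclideanSpace ℝ (Fin n)) (t : ℝ) :
    EuclideanSpace ℝ (Fin (n + 1)) :=
  (WithLp.equiv 2 _).symm (Fin.snoc ((WithLp.equiv 2 _) x) t)

lemma myL_castSucc {n : ℕ} (x : EuclideanSpace ℝ (Fin n)) (t : ℝ) (i : Fin n) :
    myL x t i.castSucc = x i := by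
  simp only [myL, WithLp.equiv_symm_apply, WithLp.ofLp_toLp, Fin.snoc_castSucc]; rfl

lemma myL_last {n : ℕ} (x : EuclideanSpace ℝ (Fin n)) (t : ℝ) :
    myL x t (Fin.last n) = t := by
  simp only [myL, WithLp.equiv_symm_apply, WithLp.ofLp_toLp, Fin.snoc_last]

lemma dist_myL {n : ℕ} (x y : EuclideanSpace ℝ (Fin n)) (s t : ℝ) :
    dist (myL x s) (myL y t) = Real.sqrt (dist x y ^ 2 + dist s t ^ 2) := by
  rw [EuclideanSpace.dist_eq, EuclideanSpace.dist_eq]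
  rw [Fin.sum_univ_castSucc]
  have h1 : ∀ i : Fin n, (myL x s) i.castSucc = x i := fun i => myL_castSucc _ _ _
  have h2 : ∀ i : Fin n, (myL y t) i.castSucc = y i := fun i => myL_castSucc _ _ _
  have h3 : (myL x s) (Fin.last n) = s := myL_last _ _
  have h4 : (myL y t) (Fin.last n) = t := myL_last _ _
  rw [h3, h4]
  rw [Real.sq_sqrt (Finset.sum_nonneg fun i _ => sq_nonneg _)]
  congr 1
  congr 1
  exact Finset.sum_congr rfl fun i _ => by rw [h1, h2]

theorem stmt_9 (M : ℕ → ℕ)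
    (hM : ∀ n : ℕ, IsGreatest
      {k : ℕ | ∃ (c : EuclideanSpace ℝ (Fin n)) (S : Finset (EuclideanSpace ℝ (Fin n))),
        S.card = k ∧ ↑S ⊆ Metric.ball c 1 ∧
        ∀ x ∈ S, ∀ y ∈ S, x ≠ y → 1 ≤ dist x y} (M n)) :
    ∀ n : ℕ, 1 ≤ n → 1 < M n ∧ M n < M (n + 1) := by
  classical
  intro n hn
  -- Part 1 : 1 < M n
  have h2 : 2 ≤ M n := by
    apply (hM n).2
    have i0 : Fin n := ⟨0, hn⟩
    set p : EuclideanSpace ℝ (Fin n) := EuclideanSpace.single i0 (1/2 : ℝ) with hp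
    set q : EuclideanSpace ℝ (Fin n) := EuclideanSpace.single i0 (-(1/2) : ℝ) with hq
    have hdist : dist p q = 1 := by
      rw [hp, hq, EuclideanSpace.dist_single_same]
      rw [Real.dist_eq]; norm_num
    have hne : p ≠ q := by
      intro h; rw [h, dist_self] at hdist; norm_num at hdist
    refine ⟨0, {p, q}, ?_, ?_, ?_⟩
    · rw [Finset.card_insert_of_notMem (by simpa using hne)]; simp
    · intro x hx
      simp only [Finset.coe_insert, Finset.coe_singleton, Set.mem_insert_iff,
        Set.mem_singleton_iff] at hx
      rcases hx with rfl | rfl <;>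
      · rw [Metric.mem_ball, dist_zero_right]
        first
        | (rw [hp, EuclideanSpace.norm_single]; norm_num)
        | (rw [hq, EuclideanSpace.norm_single]; norm_num)
    · intro x hx y hy hxy
      simp only [Finset.mem_insert, Finset.mem_singleton] at hx hy
      rcases hx with rfl | rfl <;> rcases hy with rfl | rfl <;>
        first
        | exact absurd rfl hxy
        | rw [hdist]
        | (rw [dist_comm, hdist])
  have h1 : 1 < M n := by omega
  refine ⟨h1, ?_⟩
  -- Part 2 : M n < M (n+1)
  obtain ⟨c, S, hcard, hball, hsep⟩ := (hM n).1
  have hSne : S.Nonempty := by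
    rw [← Finset.card_pos, hcard]; omega
  set r : ℝ := S.sup' hSne (fun x => dist x c) with hr
  have hr1 : r < 1 := by
    rw [hr, Finset.sup'_lt_iff]
    intro x hx
    exact Metric.mem_ball.mp (hball hx)
  have hr0 : 0 ≤ r := by
    obtain ⟨x, hx⟩ := hSne
    exact le_trans dist_nonneg (Finset.le_sup' (fun y => dist y c) hx)
  set s : ℝ := Real.sqrt ((1 - r^2)/2) with hs
  have hs0 : 0 < s := Real.sqrt_pos.mpr (by nlinarith)
  have hs2 : s^2 = (1-r^2)/2 := Real.sq_sqrt (by nlinarith)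
  have hs1 : s < 1 := by nlinarith [hs0.le]
  -- new configuration
  set f : EuclideanSpace ℝ (Fin n) → EuclideanSpace ℝ (Fin (n+1)) := fun x => myL x 0 with hf
  have hfinj : Function.Injective f := by
    intro x y hxy
    have : dist (f x) (f y) = 0 := by rw [hxy, dist_self]
    rw [hf] at this
    simp only at this
    rw [dist_myL, dist_self] at this
    rw [show dist x y ^ 2 + (0:ℝ) ^ 2 = dist x y ^ 2 by ring,
      Real.sqrt_sq dist_nonneg] at this
    exact dist_eq_zero.mp this
  set S' : Finset (EuclideanSpace ℝ (Fin (n+1))) := insert (myL c 1) (S.image f) with hS'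
  have hnotmem : myL c 1 ∉ S.image f := by
    intro h
    obtain ⟨x, _, hx⟩ := Finset.mem_image.mp h
    have : (myL c 1) (Fin.last n) = (1:ℝ) := myL_last _ _
    have h0 : (f x) (Fin.last n) = (0:ℝ) := myL_last _ _
    rw [hx] at h0
    rw [this] at h0
    norm_num at h0
  have hcard' : S'.card = M n + 1 := by
    rw [hS', Finset.card_insert_of_notMem hnotmem,
      Finset.card_image_of_injective _ hfinj, hcard]
  have hmem : M n + 1 ≤ M (n+1) := by
    apply (hM (n+1)).2
    refine ⟨myL c s, S', hcard', ?_, ?_⟩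
    · intro z hz
      simp only [hS', Finset.coe_insert, Set.mem_insert_iff, Finset.coe_image,
        Set.mem_image, Finset.mem_coe] at hz
      rw [Metric.mem_ball]
      rcases hz with rfl | ⟨x, hx, rfl⟩
      · rw [dist_myL, dist_self]
        have : Real.sqrt (0 ^ 2 + dist 1 s ^ 2) = |1 - s| := by
          rw [Real.dist_eq]; rw [show (0:ℝ)^2 + |1-s|^2 = |1-s|^2 by ring]
          exact Real.sqrt_sq (abs_nonneg _)
        rw [this, abs_of_nonneg (by linarith)]
        linarith
      · rw [hf]; simp only
        rw [dist_myL]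
        have hxc : dist x c ≤ r := Finset.le_sup' (fun y => dist y c) hx
        have hd0 : (0:ℝ) ≤ dist x c := dist_nonneg
        have : dist x c ^ 2 + dist (0:ℝ) s ^ 2 < 1 := by
          rw [Real.dist_eq, abs_of_nonpos (by linarith), neg_sub, sub_zero]
          nlinarith
        calc Real.sqrt (dist x c ^ 2 + dist (0:ℝ) s ^ 2) < Real.sqrt 1 := by
              apply Real.sqrt_lt_sqrt (by positivity) this
          _ = 1 := Real.sqrt_one
    · intro x hx y hy hxy
      simp only [hS', Finset.mem_insert, Finset.mem_image] at hx hy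
      have key : ∀ z ∈ S, 1 ≤ dist (myL c 1) (f z) := by
        intro z hz
        rw [hf]; simp only
        rw [dist_myL]
        calc (1:ℝ) = Real.sqrt 1 := Real.sqrt_one.symm
          _ ≤ Real.sqrt (dist c z ^ 2 + dist (1:ℝ) (0:ℝ) ^ 2) := by
              apply Real.sqrt_le_sqrt
              rw [Real.dist_eq]
              norm_num
      rcases hx with rfl | ⟨a, ha, rfl⟩
      · rcases hy with rfl | ⟨b, hb, rfl⟩
        · exact absurd rfl hxy
        · exact key b hb
      · rcases hy with rfl | ⟨b, hb, rfl⟩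
        · rw [dist_comm]; exact key a ha
        · have hab : a ≠ b := fun h => hxy (by rw [h])
          have := hsep a ha b hb hab
          rw [hf]; simp only
          rw [dist_myL, dist_self]
          rw [show dist a b ^2 + (0:ℝ)^2 = dist a b ^ 2 by ring,
            Real.sqrt_sq dist_nonneg]
          exact this
  omega
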